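/- In an implicative aBE algebra, for all x, y, z: ((y → x) → z) and x satisfy x → ((y → x) → z) = x → z. -/
import Mathlib


class ImplicativeABE (X : Type*) where
  imp : X → X → X
  one : X
  one_imp : ∀ x, imp one x = x
  imp_one : ∀ x, imp x one = one
  imp_self : ∀ x, imp x x = one
  exch : ∀ x y z, imp x (imp y z) = imp y (imp x z)
  antisymm : ∀ x y, imp x y = one → imp y x = one → x = y
  implicative : ∀ x y, imp (imp x y) x = x

infixr:60 " ⮕ " => ImplicativeABE.imp
notation "𝟙" => ImplicativeABE.one

theorem stmt14 {X : Type*} [ImplicativeABE X] (x y z : X) :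
    x ⮕ ((y ⮕ x) ⮕ z) = x ⮕ z := by
  have h : y ⮕ x = (x ⮕ z) ⮕ (y ⮕ x) := by
    conv_lhs => rw [← ImplicativeABE.implicative x z, ImplicativeABE.exch]
  rw [ImplicativeABE.exch, h, ImplicativeABE.implicative]
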